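/- Let η ∈ (0, 1/4], let R ≥ log₂(1/η), let (A₁,…,A_k) be a strictly R-balanced k-partite k-graph with density p, and let Xᵢ ⊆ Aᵢ be subsets satisfying (∏ᵢ|Xᵢ|)/(∏ᵢ|Aᵢ|) ∈ [0,η] ∪ [(1-η)², 1]. Then e(X₁,…,X_k) ≤ p·∏ᵢ|Xᵢ| + (η·log₂(1/η))·(p/R)·∏ᵢ|Aᵢ|. -/

import Mathlib

open Finset

/-- The edges of a `k`-partite `k`-graph (given by a set `E` of tuples) induced on the
parts `B i`. -/
def inducedEdges {V : Type*} [DecidableEq V] {k : ℕ} (E : Finset (Fin k → V))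
    (B : Fin k → Finset V) : Finset (Fin k → V) :=
  E.filter fun e => ∀ i, e i ∈ B i

/-- The edge density of the `k`-partite `k`-graph `E` induced on the parts `B i`. -/
noncomputable def hgDensity {V : Type*} [DecidableEq V] {k : ℕ} (E : Finset (Fin k → V))
    (B : Fin k → Finset V) : ℝ :=
  ((inducedEdges E B).card : ℝ) / ∏ i, ((B i).card : ℝ)

/-- The `R`-energy `|B₁|⋯|B_k| · d(B₁,…,B_k)^R` of the `k`-partite `k`-graph `E` induced on
the parts `B i`.  (If there are no edges, the density is `0` and hence so is the energy.) -/
noncomputable def hgEnergy {V : Type*} [DecidableEq V] (R : ℝ) {k : ℕ}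
    (E : Finset (Fin k → V)) (B : Fin k → Finset V) : ℝ :=
  (∏ i, ((B i).card : ℝ)) * hgDensity E B ^ R

/-- `(A₁,…,A_k)` is strictly `R`-balanced: any tuple of subsets, at least one of which is
proper, has strictly smaller `R`-energy. -/
def StrictlyBalanced {V : Type*} [DecidableEq V] (R : ℝ) {k : ℕ}
    (E : Finset (Fin k → V)) (A : Fin k → Finset V) : Prop :=
  ∀ B : Fin k → Finset V, (∀ i, B i ⊆ A i) → B ≠ A → hgEnergy R E B < hgEnergy R E A


lemma myexp_le_one_add {t : ℝ} (ht0 : 0 ≤ t) (ht1 : t ≤ 1) :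
    Real.exp (t * Real.log 2) ≤ 1 + t := by
  have h := convexOn_exp.2 (Set.mem_univ (0:ℝ)) (Set.mem_univ (Real.log 2))
    (by linarith : (0:ℝ) ≤ 1 - t) ht0 (by ring)
  simp only [smul_eq_mul, mul_zero, zero_add, Real.exp_zero,
    Real.exp_log two_pos] at h
  linarith

lemma mykey_ineq (η R x : ℝ) (hη0 : 0 < η)
    (hL2 : 2 ≤ Real.logb 2 (1/η)) (hR : Real.logb 2 (1/η) ≤ R)
    (hx0 : 0 ≤ x)
    (hcase : x ≤ η ∨ ((1-η)^2 ≤ x ∧ x ≤ 1)) :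
    x ^ (1 - 1/R) ≤ x + η * Real.logb 2 (1/η) / R := by
  set L := Real.logb 2 (1/η) with hLdef
  have hR2 : (2:ℝ) ≤ R := le_trans hL2 hR
  have hR0 : (0:ℝ) < R := by linarith
  set a := 1/R with ha
  set t := L/R with htdef
  have ha0 : 0 < a := by positivity
  have ha2 : a ≤ 1/2 := by
    rw [ha, div_le_div_iff₀ hR0 two_pos]; linarith
  have ht0 : 0 ≤ t := div_nonneg (by linarith) hR0.le
  have ht1 : t ≤ 1 := by rw [htdef, div_le_one hR0]; exact hR
  have hgoal_rhs : η * L / R = η * t := by rw [htdef]; ring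
  have h2 : Real.log 2 ≠ 0 := ne_of_gt (Real.log_pos one_lt_two)
  have hexp : η ^ (-a) ≤ 1 + t := by
    have hηa : η ^ (-a) = Real.exp (t * Real.log 2) := by
      rw [Real.rpow_def_of_pos hη0]
      congr 1
      rw [htdef, hLdef, ha, Real.logb,
        Real.log_div one_ne_zero (ne_of_gt hη0), Real.log_one]
      field_simp
      ring
    rw [hηa]
    exact myexp_le_one_add ht0 ht1
  rcases hcase with h | ⟨h1, h2'⟩
  · -- small case : x ≤ η
    have hp1 : (0:ℝ) ≤ x * η ^ (-a) := by positivity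
    have hp2 : (0:ℝ) ≤ η ^ (1-a) := by positivity
    have amgm := Real.geom_mean_le_arith_mean2_weighted
      (by linarith : (0:ℝ) ≤ 1 - a) ha0.le hp1 hp2 (by ring)
    have hxe : (x * η ^ (-a)) ^ (1-a) * (η ^ (1-a)) ^ a = x ^ (1-a) := by
      rw [Real.mul_rpow hx0 (Real.rpow_nonneg hη0.le _),
        ← Real.rpow_mul hη0.le, ← Real.rpow_mul hη0.le, mul_assoc,
        ← Real.rpow_add hη0]
      have h0 : -a * (1-a) + (1-a) * a = 0 := by ring
      rw [h0, Real.rpow_zero, mul_one]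
    rw [hxe] at amgm
    have hsplit : (1-a) * (x * η ^ (-a)) + a * η ^ (1-a)
        = η ^ (-a) * ((1-a) * x + a * η) := by
      have he : η ^ (1-a) = η * η ^ (-a) := by
        rw [show (1-a) = 1 + (-a) by ring, Real.rpow_add hη0, Real.rpow_one]
      rw [he]; ring
    rw [hsplit] at amgm
    have hM : (0:ℝ) ≤ (1-a) * x + a * η := by
      have := mul_nonneg (by linarith : (0:ℝ) ≤ 1-a) hx0
      nlinarith
    have step2 : η ^ (-a) * ((1-a) * x + a * η) ≤ (1+t) * ((1-a) * x + a * η) :=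
      mul_le_mul_of_nonneg_right hexp hM
    have hK : a ≤ t * (1-a) := by
      have h1L : (1:ℝ) ≤ L * (1-a) := by nlinarith
      have hdd : (1:ℝ)/R ≤ L * (1-a) / R := by gcongr
      rw [htdef, ha]
      calc (1:ℝ)/R ≤ L * (1-a)/R := hdd
        _ = L/R * (1-a) := by ring
    have hid : x + η * t - (1+t) * ((1-a) * x + a * η)
        = (η - x) * (t * (1-a) - a) := by ring
    have hprod : (0:ℝ) ≤ (η - x) * (t * (1-a) - a) :=
      mul_nonneg (by linarith) (by linarith)
    rw [hgoal_rhs]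
    linarith [amgm, step2, hprod, hid]
  · -- big case
    have amgm := Real.geom_mean_le_arith_mean2_weighted
      (by linarith : (0:ℝ) ≤ 1 - a) ha0.le hx0 zero_le_one (by ring)
    rw [Real.one_rpow, mul_one, mul_one] at amgm
    have h2a : 2 * a ≤ t := by
      rw [ha, htdef, show 2*((1:ℝ)/R) = 2/R by ring]
      gcongr
    have hx2 : 1 - x ≤ 2 * η := by nlinarith
    have p1 : a * (1-x) ≤ a * (2*η) := mul_le_mul_of_nonneg_left hx2 ha0.le
    have p2 : (2*a) * η ≤ t * η := mul_le_mul_of_nonneg_right h2a hη0.le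
    rw [hgoal_rhs]
    nlinarith [amgm, p1, p2]

theorem edge_count_in_balanced_strengthened {V : Type*} [DecidableEq V] {k : ℕ}
    (η R : ℝ) (hη0 : 0 < η) (hη : η ≤ 1 / 4) (hR : Real.logb 2 (1 / η) ≤ R)
    (A X : Fin k → Finset V) (E : Finset (Fin k → V))
    (hE : ∀ e ∈ E, ∀ i, e i ∈ A i)
    (hbal : StrictlyBalanced R E A) (hX : ∀ i, X i ⊆ A i)
    (hratio : (∏ i, ((X i).card : ℝ)) / (∏ i, ((A i).card : ℝ)) ≤ η ∨
      ((1 - η) ^ 2 ≤ (∏ i, ((X i).card : ℝ)) / (∏ i, ((A i).card : ℝ)) ∧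
        (∏ i, ((X i).card : ℝ)) / (∏ i, ((A i).card : ℝ)) ≤ 1)) :
    ((inducedEdges E X).card : ℝ) ≤
      hgDensity E A * ∏ i, ((X i).card : ℝ) +
        (η * Real.logb 2 (1 / η)) * (hgDensity E A / R) * ∏ i, ((A i).card : ℝ) := by
  have hL2 : (2:ℝ) ≤ Real.logb 2 (1/η) := by
    have h4 : (4:ℝ) ≤ 1/η := by rw [le_div_iff₀ hη0]; linarith
    calc (2:ℝ) = Real.logb 2 4 := by
          rw [show (4:ℝ) = 2 ^ (2:ℕ) by norm_num, Real.logb, Real.log_pow]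
          have h2 : Real.log 2 ≠ 0 := ne_of_gt (Real.log_pos one_lt_two)
          field_simp
          norm_num
      _ ≤ Real.logb 2 (1/η) := by
          exact Real.logb_le_logb_of_le one_lt_two (by norm_num) h4
  have hR2 : (2:ℝ) ≤ R := hL2.trans hR
  have hR0 : (0:ℝ) < R := by linarith
  set p := hgDensity E A with hp
  set PA := ∏ i, ((A i).card : ℝ) with hPAdef
  set PX := ∏ i, ((X i).card : ℝ) with hPXdef
  have hPA0 : (0:ℝ) ≤ PA := prod_nonneg fun i _ => Nat.cast_nonneg _
  have hPX0 : (0:ℝ) ≤ PX := prod_nonneg fun i _ => Nat.cast_nonneg _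
  have hp0 : 0 ≤ p := by
    rw [hp, hgDensity]; exact div_nonneg (Nat.cast_nonneg _) (by rw [← hPAdef]; exact hPA0)
  have hsecond : 0 ≤ (η * Real.logb 2 (1/η)) * (p/R) * PA :=
    mul_nonneg (mul_nonneg (mul_nonneg hη0.le (by linarith)) (div_nonneg hp0 hR0.le)) hPA0
  by_cases hzero : PX = 0
  · have hempty : inducedEdges E X = ∅ := by
      rw [hPXdef, prod_eq_zero_iff] at hzero
      obtain ⟨i, -, hi⟩ := hzero
      have hXi : X i = ∅ := card_eq_zero.mp (by exact_mod_cast hi)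
      rw [inducedEdges, filter_eq_empty_iff]
      intro e _ hcon
      exact absurd (hcon i) (by simp [hXi])
    rw [hempty, hzero, mul_zero, zero_add]
    simpa using hsecond
  · have hPXpos : 0 < PX := hPX0.lt_of_ne (Ne.symm hzero)
    have hPAX : PX ≤ PA :=
      prod_le_prod (fun i _ => Nat.cast_nonneg _)
        (fun i _ => Nat.cast_le.2 (card_le_card (hX i)))
    have hPApos : 0 < PA := lt_of_lt_of_le hPXpos hPAX
    set x := PX / PA with hxdef
    have hx0 : 0 < x := div_pos hPXpos hPApos
    have hEn : hgEnergy R E X ≤ hgEnergy R E A := by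
      by_cases hXA : X = A
      · rw [hXA]
      · exact le_of_lt (hbal X hX hXA)
    simp only [hgEnergy] at hEn
    rw [← hPXdef, ← hPAdef, ← hp] at hEn
    set q := p * x ^ (-(1/R)) with hqdef
    have hq0 : 0 ≤ q := mul_nonneg hp0 (Real.rpow_nonneg hx0.le _)
    have hqR : q ^ R * PX = PA * p ^ R := by
      rw [hqdef, Real.mul_rpow hp0 (Real.rpow_nonneg hx0.le _),
        ← Real.rpow_mul hx0.le, show -(1/R)*R = (-1:ℝ) by field_simp,
        Real.rpow_neg_one, hxdef]
      field_simp
    have hdq : hgDensity E X ≤ q := by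
      by_contra hlt
      push_neg at hlt
      have h1 : q ^ R < (hgDensity E X) ^ R := Real.rpow_lt_rpow hq0 hlt hR0
      have h2 : q ^ R * PX < (hgDensity E X) ^ R * PX :=
        mul_lt_mul_of_pos_right h1 hPXpos
      rw [hqR] at h2
      nlinarith [hEn, h2]
    have heX : ((inducedEdges E X).card : ℝ) = hgDensity E X * PX := by
      rw [hgDensity, ← hPXdef, div_mul_cancel₀ _ (ne_of_gt hPXpos)]
    have hPXx : PX = x * PA := by
      rw [hxdef, div_mul_cancel₀ _ (ne_of_gt hPApos)]
    calc ((inducedEdges E X).card : ℝ) = hgDensity E X * PX := heX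
      _ ≤ q * PX := mul_le_mul_of_nonneg_right hdq hPX0
      _ = p * PA * x ^ (1 - 1/R) := by
          rw [hqdef, hPXx,
            show p * x ^ (-(1/R)) * (x * PA) = p * PA * (x ^ (-(1/R)) * x ^ (1:ℝ)) by
              rw [Real.rpow_one]; ring,
            ← Real.rpow_add hx0, show -(1/R) + 1 = 1 - 1/R by ring]
      _ ≤ p * PA * (x + η * Real.logb 2 (1/η) / R) :=
          mul_le_mul_of_nonneg_left
            (mykey_ineq η R x hη0 hL2 hR hx0.le hratio)
            (mul_nonneg hp0 hPA0)
      _ = p * PX + (η * Real.logb 2 (1/η)) * (p/R) * PA := by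
          rw [hPXx]; field_simp
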